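/- arXiv:1807.06312 — 7 statements merged into one kernel-verified Lean document; each statement's English description precedes it below -/
import Mathlib

section
/- The n×n matrix A with entries A_{uv} = ∑_{i=max{0,v-u}}^{min{v-1,n-u}} C(v-1,i)(1-β)^{v-1-i} β^i C(n-v, u-v+i) α^{u-v+i} (1-α)^{n-u-i}, for u,v ∈ {1,…,n}, has determinant det A = (1-α-β)^{n(n-1)/2}. -/
open Finset

/-- Entry `A_{u+1, v+1}` (0-indexed) of the degree-distribution transition matrix:
the probability that a vertex of true degree `v` in an `n`-node network is observed
with degree `u`, when present links are deleted with probability `β` and absent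
links are added with probability `α`. -/
noncomputable def Aent (n : ℕ) (α β : ℝ) (u v : ℕ) : ℝ :=
  ∑ i ∈ Finset.Icc (v - u) (min v (n - 1 - u)),
    (v.choose i : ℝ) * (1 - β) ^ (v - i) * β ^ i *
      ((n - 1 - v).choose (i + u - v) : ℝ) * α ^ (i + u - v) * (1 - α) ^ (n - 1 - u - i)

/-- The `n × n` transition matrix `A(n, α, β)`. -/
noncomputable def Amat (n : ℕ) (α β : ℝ) : Matrix (Fin n) (Fin n) ℝ :=
  fun u v => Aent n α β u v

section Aux
open Polynomial

lemma coeff_lin_pow (a b : ℝ) (m k : ℕ) :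
    ((C a * X + C b) ^ m).coeff k = (m.choose k : ℝ) * a ^ k * b ^ (m - k) := by
  rcases le_or_gt k m with h | h
  · rw [add_pow, finset_sum_coeff]
    have : ∀ j ∈ range (m+1),
        ((C a * X) ^ j * C b ^ (m - j) * (m.choose j : ℝ[X])).coeff k
          = if j = k then (m.choose k : ℝ) * a ^ k * b ^ (m - k) else 0 := by
      intro j hj
      simp only [mul_pow, ← C_pow, ← C_eq_natCast]
      rw [coeff_mul_C, coeff_mul_C, coeff_C_mul, coeff_X_pow]
      rcases eq_or_ne j k with rfl | hne
      · simp; ring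
      · simp [hne, Ne.symm hne]
    rw [Finset.sum_congr rfl this, Finset.sum_ite_eq' (range (m+1)) k]
    simp [Nat.lt_succ_iff.mpr h]
  · rw [Nat.choose_eq_zero_of_lt h, coeff_eq_zero_of_natDegree_lt]
    · simp
    · calc ((C a * X + C b) ^ m).natDegree ≤ m * (C a * X + C b).natDegree := natDegree_pow_le
        _ ≤ m * 1 := by
            gcongr
            exact natDegree_add_le_of_degree_le (natDegree_C_mul_le _ _ |>.trans (by simp)) (by simp)
        _ < k := by omega

lemma aent_eq_coeff (n : ℕ) (α β : ℝ) (u v : ℕ) (hv : v ≤ n - 1) :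
    Aent n α β u v
      = ((C (1-β) * X + C β) ^ v * (C α * X + C (1-α)) ^ (n-1-v)).coeff u := by
  rw [coeff_mul, Finset.Nat.sum_antidiagonal_eq_sum_range_succ_mk]
  simp only [coeff_lin_pow]
  set g : ℕ → ℝ := fun k => (v.choose k : ℝ) * (1-β) ^ k * β ^ (v - k) *
      (((n-1-v).choose (u-k) : ℝ) * α ^ (u-k) * (1-α) ^ (n-1-v - (u-k)))
  have hg : ∀ k ∈ range (u+1),
      ((v.choose k : ℝ) * (1-β)^k * β^(v-k)) * (((n-1-v).choose (u-k) : ℝ) * α^(u-k) * (1-α)^(n-1-v-(u-k))) = g k := by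
    intro k _; rfl
  rw [Finset.sum_congr rfl hg]
  have hsub : Finset.Icc (v - min v (n-1-u)) (min u v) ⊆ range (u+1) := by
    intro k hk; simp only [Finset.mem_Icc] at hk; simp only [Finset.mem_range]; omega
  have hzero : ∀ k ∈ range (u+1), k ∉ Finset.Icc (v - min v (n-1-u)) (min u v) → g k = 0 := by
    intro k hk hk'
    simp only [Finset.mem_range] at hk
    simp only [Finset.mem_Icc, not_and_or, not_le] at hk'
    rcases hk' with hk' | hk'
    · have : n - 1 - v < u - k := by omega
      simp [g, Nat.choose_eq_zero_of_lt this]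
    · have : v < k := by omega
      simp [g, Nat.choose_eq_zero_of_lt this]
  rw [← Finset.sum_subset hsub hzero]
  refine Finset.sum_nbij' (fun i => v - i) (fun k => v - k) ?_ ?_ ?_ ?_ ?_
  · intro i hi; simp only [Finset.mem_Icc] at hi ⊢; omega
  · intro k hk; simp only [Finset.mem_Icc] at hk ⊢; omega
  · intro i hi; simp only [Finset.mem_Icc] at hi; show v - (v - i) = i; omega
  · intro k hk; simp only [Finset.mem_Icc] at hk; show v - (v - k) = k; omega
  · intro i hi
    simp only [Finset.mem_Icc] at hi
    have h1 : v - (v - i) = i := by omega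
    have h2 : u - (v - i) = i + u - v := by omega
    have h3 : n - 1 - v - (i + u - v) = n - 1 - u - i := by omega
    have h0 : v.choose (v - i) = v.choose i := Nat.choose_symm (by omega)
    simp only [g, h1, h2, h3, h0]
    ring

lemma det_Amat_of_ne (n : ℕ) (α β : ℝ) (hα : α ≠ 1) :
    (Amat n α β).det = (1 - α - β) ^ (n * (n - 1) / 2) := by
  set b : ℝ := β / (1 - α) with hbdef
  have h1α : (1 : ℝ) - α ≠ 0 := sub_ne_zero.mpr (Ne.symm hα)
  have hb : b * (1 - α) = β := div_mul_cancel₀ β h1α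
  set q : ℝ[X] := C α * X + C (1 - α) with hq
  set L : Matrix (Fin n) (Fin n) ℝ :=
    fun u j => (X ^ (j : ℕ) * q ^ (n - 1 - (j : ℕ))).coeff u with hL
  set U : Matrix (Fin n) (Fin n) ℝ :=
    fun j v => ((C (1 - b) * X + C b) ^ (v : ℕ)).coeff j with hU
  have hfact : Amat n α β = L * U := by
    ext u v
    have hv : (v : ℕ) ≤ n - 1 := by have := v.2; omega
    have hvn : (v : ℕ) + 1 ≤ n := v.2
    rw [Matrix.mul_apply]
    show Aent n α β u v = _
    rw [aent_eq_coeff n α β u v hv]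
    have hterm : ∀ j : Fin n, L u j * U j v
        = (C (U j v) * (X ^ (j:ℕ) * q ^ (n-1-(j:ℕ)))).coeff u := by
      intro j; rw [coeff_C_mul]; exact mul_comm _ _
    rw [Finset.sum_congr rfl (fun j _ => hterm j), ← finset_sum_coeff]
    congr 1
    simp only [hU]
    have polyid : (C (1-β) * X + C β) ^ (v:ℕ) * q ^ (n-1-(v:ℕ))
        = ∑ j ∈ range n, C (((C (1-b) * X + C b) ^ (v:ℕ)).coeff j) * (X ^ j * q ^ (n-1-j)) := by
      have hzero : ∀ j ∈ range n, j ∉ range ((v:ℕ)+1) →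
          C (((C (1-b) * X + C b) ^ (v:ℕ)).coeff j) * (X ^ j * q ^ (n-1-j)) = 0 := by
        intro j hj hj'
        simp only [Finset.mem_range, Nat.lt_succ_iff, not_le] at hj hj'
        rw [coeff_lin_pow, Nat.choose_eq_zero_of_lt hj']
        simp
      rw [← Finset.sum_subset (Finset.range_subset_range.mpr hvn) hzero]
      have key : (C (1-β) * X + C β) = C (1-b) * X + C b * q := by
        rw [hq, mul_add, ← mul_assoc, ← C_mul, ← C_mul, ← add_assoc, ← add_mul, ← C_add]
        have e1 : (1 : ℝ) - b + b * α = 1 - β := by rw [← hb]; ring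
        rw [e1, hb]
      rw [key, add_pow, Finset.sum_mul]
      apply Finset.sum_congr rfl
      intro j hj
      simp only [Finset.mem_range, Nat.lt_succ_iff] at hj
      rw [coeff_lin_pow, C_mul, C_mul, C_pow, C_pow, C_eq_natCast, mul_pow (C b) q,
        show n-1-j = (v:ℕ)-j + (n-1-(v:ℕ)) from by omega, pow_add]
      ring
    rw [polyid]
    exact (Fin.sum_univ_eq_sum_range
      (fun j => C (((C (1-b) * X + C b) ^ (v:ℕ)).coeff j) * (X ^ j * q ^ (n-1-j))) n).symm
  -- L is lower triangular
  have hLtri : L.BlockTriangular OrderDual.toDual := by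
    intro u j h
    have huj : (u : ℕ) < (j : ℕ) := h
    simp only [hL, mul_comm (X ^ (j:ℕ)), coeff_mul_X_pow']
    rw [if_neg (by omega)]
  have hUtri : U.BlockTriangular id := by
    intro j v h
    have hjv : (v : ℕ) < (j : ℕ) := h
    simp only [hU, coeff_lin_pow, Nat.choose_eq_zero_of_lt hjv]
    simp
  have hLdiag : ∀ j : Fin n, L j j = (1 - α) ^ (n - 1 - (j:ℕ)) := by
    intro j
    simp only [hL, mul_comm (X ^ (j:ℕ)), coeff_mul_X_pow']
    rw [if_pos le_rfl, Nat.sub_self, hq, coeff_lin_pow]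
    simp
  have hUdiag : ∀ j : Fin n, U j j = (1 - b) ^ (j:ℕ) := by
    intro j
    simp only [hU, coeff_lin_pow]
    simp
  have hsum : ∑ j : Fin n, (n - 1 - (j:ℕ)) = n * (n-1) / 2 := by
    rw [Fin.sum_univ_eq_sum_range (fun j => n - 1 - j) n]
    rw [Finset.sum_range_reflect (fun j => j) n]
    have := Finset.sum_range_id_mul_two n
    omega
  have hsum2 : ∑ j : Fin n, (j:ℕ) = n * (n-1) / 2 := by
    rw [Fin.sum_univ_eq_sum_range (fun j => j) n]
    have := Finset.sum_range_id_mul_two n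
    omega
  rw [hfact, Matrix.det_mul, Matrix.det_of_lowerTriangular L hLtri,
    Matrix.det_of_upperTriangular hUtri]
  simp only [hLdiag, hUdiag]
  rw [Finset.prod_pow_eq_pow_sum, Finset.prod_pow_eq_pow_sum, hsum, hsum2, ← mul_pow]
  congr 1
  have : (1 - α) * (1 - b) = 1 - α - b * (1 - α) := by ring
  rw [this, hb]

end Aux

theorem det_Amat (n : ℕ) (hn : 1 ≤ n) (α β : ℝ)
    (hα : α ∈ Set.Icc (0 : ℝ) 1) (hβ : β ∈ Set.Icc (0 : ℝ) 1) :
    (Amat n α β).det = (1 - α - β) ^ (n * (n - 1) / 2) := by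
  rcases eq_or_ne α 1 with rfl | hne
  · have hcont : Continuous (fun a : ℝ => (Amat n a β).det) := by
      apply Continuous.matrix_det
      apply continuous_matrix
      intro u v
      unfold Amat Aent
      fun_prop
    have hcont2 : Continuous (fun a : ℝ => (1 - a - β) ^ (n*(n-1)/2)) := by fun_prop
    have heq : (fun a : ℝ => (Amat n a β).det) = fun a => (1 - a - β) ^ (n*(n-1)/2) := by
      apply Continuous.ext_on (dense_compl_singleton (1:ℝ)) hcont hcont2
      intro x hx
      exact det_Amat_of_ne n x β hx
    exact congrFun heq 1
  · exact det_Amat_of_ne n α β hne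
end

section
/- The matrix A(n, α, β) defined by A_{uv} = ∑_{i=max{0,v-u}}^{min{v-1,n-u}} C(v-1,i)(1-β)^{v-1-i} β^i C(n-v, u-v+i) α^{u-v+i} (1-α)^{n-u-i} is invertible if and only if α + β ≠ 1. -/
open Finset

lemma gf (n : ℕ) (hn : 1 ≤ n) (α β x : ℝ) (v : ℕ) (hv : v ≤ n - 1) :
    ∑ u ∈ Finset.range n, x ^ u * Aent n α β u v
      = (β + (1 - β) * x) ^ v * (α * x + (1 - α)) ^ (n - 1 - v) := by
  unfold Aent
  rw [add_pow, add_pow, Finset.sum_mul_sum]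
  simp only [Finset.mul_sum]
  rw [Finset.sum_sigma', ← Finset.sum_product']
  refine Finset.sum_nbij' (fun p => (p.2, p.2 + p.1 - v))
    (fun q => ⟨v - q.1 + q.2, q.1⟩) ?_ ?_ ?_ ?_ ?_
  · rintro ⟨u, i⟩ hp
    simp only [Finset.mem_sigma, Finset.mem_range, Finset.mem_Icc, le_min_iff] at hp
    simp only [Finset.mem_product, Finset.mem_range]
    omega
  · rintro ⟨i, j⟩ hq
    simp only [Finset.mem_product, Finset.mem_range] at hq
    simp only [Finset.mem_sigma, Finset.mem_range, Finset.mem_Icc, le_min_iff]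
    omega
  · rintro ⟨u, i⟩ hp
    simp only [Finset.mem_sigma, Finset.mem_range, Finset.mem_Icc, le_min_iff] at hp
    have h : v - i + (i + u - v) = u := by omega
    simp [h]
  · rintro ⟨i, j⟩ hq
    simp only [Finset.mem_product, Finset.mem_range] at hq
    have h : i + (v - i + j) - v = j := by omega
    simp [h]
  · rintro ⟨u, i⟩ hp
    simp only [Finset.mem_sigma, Finset.mem_range, Finset.mem_Icc, le_min_iff] at hp
    obtain ⟨hu, hi1, hi2, hi3⟩ := hp
    have e1 : n - 1 - v - (i + u - v) = n - 1 - u - i := by omega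
    have e2 : (v - i) + (i + u - v) = u := by omega
    have e2' : x ^ (v - i) * x ^ (i + u - v) = x ^ u := by rw [← pow_add, e2]
    simp only [mul_pow]
    rw [e1, ← e2']
    ring

theorem Amat_invertible_iff (n : ℕ) (hn : 2 ≤ n) (α β : ℝ)
    (hα : α ∈ Set.Icc (0 : ℝ) 1) (hβ : β ∈ Set.Icc (0 : ℝ) 1) :
    IsUnit (Amat n α β) ↔ α + β ≠ 1 := by
  obtain ⟨hα0, hα1⟩ := hα
  obtain ⟨hβ0, hβ1⟩ := hβ
  set xf : Fin n → ℝ := fun j => (j : ℝ) + 1 with hxf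
  have hden : ∀ j : Fin n, 1 ≤ α * xf j + (1 - α) := by
    intro j
    have h1 : α * xf j + (1 - α) = 1 + α * (j : ℝ) := by simp only [hxf]; ring
    have h2 : (0:ℝ) ≤ α * (j : ℝ) := mul_nonneg hα0 (Nat.cast_nonneg _)
    rw [h1]; linarith
  have hden0 : ∀ j : Fin n, α * xf j + (1 - α) ≠ 0 := fun j => by
    have := hden j; linarith
  set yf : Fin n → ℝ := fun j => (β + (1 - β) * xf j) / (α * xf j + (1 - α)) with hyf
  set d : Fin n → ℝ := fun j => (α * xf j + (1 - α)) ^ (n - 1) with hd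
  have hxinj : Function.Injective xf := by
    intro i j h
    simp only [hxf, add_left_inj, Nat.cast_inj] at h
    exact Fin.ext (by exact_mod_cast h)
  -- key matrix identity
  have key : Matrix.vandermonde xf * Amat n α β
      = Matrix.diagonal d * Matrix.vandermonde yf := by
    ext j v
    rw [Matrix.mul_apply, Matrix.diagonal_mul]
    have hv : (v : ℕ) ≤ n - 1 := by omega
    simp only [Matrix.vandermonde, Matrix.of_apply, Amat]
    rw [Fin.sum_univ_eq_sum_range (fun u => xf j ^ u * Aent n α β u (v:ℕ)) n,
      gf n (by omega) α β (xf j) v hv]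
    simp only [hyf, hd, div_pow]
    have hsplit : (α * xf j + (1 - α)) ^ (n - 1)
        = (α * xf j + (1 - α)) ^ (v:ℕ) * (α * xf j + (1 - α)) ^ (n - 1 - (v:ℕ)) := by
      rw [← pow_add]; congr 1; omega
    rw [hsplit]
    have hpn : (α * xf j + (1 - α)) ^ (v:ℕ) ≠ 0 := pow_ne_zero _ (hden0 j)
    field_simp
    have hpn' : (xf j * α + (1 - α)) ^ (v:ℕ) ≠ 0 := by convert hpn using 2; ring
    exact (mul_div_cancel_right₀ _ hpn').symm
  -- determinants
  have hdet : (Matrix.vandermonde xf).det * (Amat n α β).det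
      = (∏ j, d j) * (Matrix.vandermonde yf).det := by
    rw [← Matrix.det_mul, key, Matrix.det_mul, Matrix.det_diagonal]
  have hX : (Matrix.vandermonde xf).det ≠ 0 := by
    rw [Ne, Matrix.det_vandermonde_eq_zero_iff]
    rintro ⟨i, j, hij, hne⟩
    exact hne (hxinj hij)
  have hD : (∏ j, d j) ≠ 0 := by
    apply Finset.prod_ne_zero_iff.mpr
    intro j _
    exact pow_ne_zero _ (hden0 j)
  rw [Matrix.isUnit_iff_isUnit_det, isUnit_iff_ne_zero]
  constructor
  · intro hA hab
    apply hA
    have hyconst : ∀ j : Fin n, yf j = 1 := by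
      intro j
      rw [hyf]
      simp only
      rw [div_eq_one_iff_eq (hden0 j)]
      have hb : β = 1 - α := by linarith
      rw [hb]; ring
    have hY : (Matrix.vandermonde yf).det = 0 := by
      rw [Matrix.det_vandermonde_eq_zero_iff]
      refine ⟨⟨0, by omega⟩, ⟨1, by omega⟩, ?_, ?_⟩
      · rw [hyconst, hyconst]
      · simp [Fin.ext_iff]
    have : (Matrix.vandermonde xf).det * (Amat n α β).det = 0 := by
      rw [hdet, hY, mul_zero]
    rcases mul_eq_zero.mp this with h | h
    · exact absurd h hX
    · exact h
  · intro hab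
    have hs : 1 - α - β ≠ 0 := by intro h; exact hab (by linarith)
    have hyinj : Function.Injective yf := by
      intro i j h
      simp only [hyf] at h
      rw [div_eq_div_iff (hden0 i) (hden0 j)] at h
      have : (1 - α - β) * (xf i - xf j) = 0 := by linear_combination h
      rcases mul_eq_zero.mp this with h' | h'
      · exact absurd h' hs
      · exact hxinj (by linarith)
    have hY : (Matrix.vandermonde yf).det ≠ 0 := by
      rw [Ne, Matrix.det_vandermonde_eq_zero_iff]
      rintro ⟨i, j, hij, hne⟩
      exact hne (hyinj hij)
    intro hA0
    exact mul_ne_zero hD hY (by rw [← hdet, hA0, mul_zero])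
end

section
/- When β = 1 - α, every entry of A(n, α, 1-α) in row u equals C(n-1, u-1) α^{u-1} (1-α)^{n-u}; in particular each row of A is constant and hence det A(n, α, 1-α) = 0 for n ≥ 2. -/
open Finset

lemma vandermonde_key (N u v : ℕ) (hu : u ≤ N) (hv : v ≤ N) :
    ∑ i ∈ Icc (v - u) (min v (N - u)), v.choose i * (N - v).choose (i + u - v)
      = N.choose u := by
  have h1 : ∑ i ∈ Icc (v - u) (min v (N - u)), v.choose i * (N - v).choose (i + u - v)
      = ∑ i ∈ Icc (v - u) v, v.choose i * (N - v).choose (i + u - v) := by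
    apply Finset.sum_subset (Finset.Icc_subset_Icc le_rfl (min_le_left _ _))
    intro i hi hni
    simp only [Finset.mem_Icc] at hi hni
    have h2 : N - v < i + u - v := by omega
    rw [Nat.choose_eq_zero_of_lt h2, mul_zero]
  rw [h1, ← Finset.Ico_add_one_right_eq_Icc, Finset.sum_Ico_eq_sum_range]
  have hrange : v + 1 - (v - u) = min u v + 1 := by omega
  rw [hrange]
  have h2 : ∀ j ∈ Finset.range (min u v + 1),
      v.choose (v - u + j) * (N - v).choose (v - u + j + u - v)
      = v.choose (min u v - j) * (N - v).choose (u - (min u v - j)) := by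
    intro j hj
    simp only [Finset.mem_range] at hj
    have e1 : v - u + j = v - (min u v - j) := by omega
    have e2 : v - u + j + u - v = u - (min u v - j) := by omega
    rw [e2, e1, Nat.choose_symm (by omega)]
  rw [Finset.sum_congr rfl h2]
  have h3 := Finset.sum_range_reflect
    (fun k => v.choose k * (N - v).choose (u - k)) (min u v + 1)
  simp only [Nat.add_sub_cancel] at h3
  rw [h3]
  have h4 : ∑ k ∈ Finset.range (min u v + 1), v.choose k * (N - v).choose (u - k)
      = ∑ k ∈ Finset.range (u + 1), v.choose k * (N - v).choose (u - k) := by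
    apply Finset.sum_subset (Finset.range_subset_range.2 (by omega))
    intro k hk hnk
    simp only [Finset.mem_range] at hk hnk
    rw [Nat.choose_eq_zero_of_lt (by omega), zero_mul]
  rw [h4]
  conv_rhs => rw [← Nat.add_sub_cancel' hv, Nat.add_choose_eq,
    Finset.Nat.sum_antidiagonal_eq_sum_range_succ_mk]

lemma Aent_eq (n : ℕ) (α : ℝ) (u v : ℕ) (hu : u ≤ n - 1) (hv : v ≤ n - 1) :
    Aent n α (1 - α) u v = ((n - 1).choose u : ℝ) * α ^ u * (1 - α) ^ (n - 1 - u) := by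
  unfold Aent
  have key : ∀ i ∈ Finset.Icc (v - u) (min v (n - 1 - u)),
      (v.choose i : ℝ) * (1 - (1 - α)) ^ (v - i) * (1 - α) ^ i *
        ((n - 1 - v).choose (i + u - v) : ℝ) * α ^ (i + u - v) * (1 - α) ^ (n - 1 - u - i)
      = ((v.choose i * (n - 1 - v).choose (i + u - v) : ℕ) : ℝ) *
          (α ^ u * (1 - α) ^ (n - 1 - u)) := by
    intro i hi
    simp only [Finset.mem_Icc] at hi
    have h1 : (1 : ℝ) - (1 - α) = α := by ring
    have e1 : α ^ (v - i) * α ^ (i + u - v) = α ^ u := by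
      rw [← pow_add]; congr 1; omega
    have e2 : (1 - α) ^ i * (1 - α) ^ (n - 1 - u - i) = (1 - α) ^ (n - 1 - u) := by
      rw [← pow_add]; congr 1; omega
    rw [h1]
    calc (v.choose i : ℝ) * α ^ (v - i) * (1 - α) ^ i *
          ((n - 1 - v).choose (i + u - v) : ℝ) * α ^ (i + u - v) * (1 - α) ^ (n - 1 - u - i)
        = ((v.choose i : ℝ) * ((n - 1 - v).choose (i + u - v) : ℝ)) *
            ((α ^ (v - i) * α ^ (i + u - v)) * ((1 - α) ^ i * (1 - α) ^ (n - 1 - u - i))) := by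
          ring
      _ = _ := by rw [e1, e2]; push_cast; ring
  rw [Finset.sum_congr rfl key, ← Finset.sum_mul, ← Nat.cast_sum,
    vandermonde_key (n - 1) u v hu hv]
  ring

theorem Amat_rows_constant_of_beta_eq_one_sub_alpha (n : ℕ) (hn : 2 ≤ n) (α : ℝ)
    (hα : α ∈ Set.Icc (0 : ℝ) 1) :
    (∀ u v : Fin n, Amat n α (1 - α) u v =
      ((n - 1).choose (u : ℕ) : ℝ) * α ^ (u : ℕ) * (1 - α) ^ (n - 1 - (u : ℕ))) ∧
    (Amat n α (1 - α)).det = 0 := by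
  have h : ∀ u v : Fin n, Amat n α (1 - α) u v =
      ((n - 1).choose (u : ℕ) : ℝ) * α ^ (u : ℕ) * (1 - α) ^ (n - 1 - (u : ℕ)) := by
    intro u v
    exact Aent_eq n α u v (by omega) (by have := v.isLt; omega)
  refine ⟨h, ?_⟩
  rw [← Matrix.det_transpose]
  apply Matrix.det_zero_of_row_eq (i := (⟨0, by omega⟩ : Fin n)) (j := ⟨1, by omega⟩)
  · simp [Fin.ext_iff]
  · funext u
    show Amat n α (1 - α) u _ = Amat n α (1 - α) u _
    rw [h u _, h u _]
end

section
/- For α = 1 and β ∉ {0,1}, A(n, 1, β) has entries A_{uv} = C(v-1, n-u)(1-β)^{v-1-n+u} β^{n-u} when u ≥ n-v+1 and 0 when u < n-v+1; consequently det A(n,1,β) = (-β)^{n(n-1)/2}. -/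
open Finset

lemma aent_alpha_one (n : ℕ) (β : ℝ) (u v : ℕ) (hu : u < n) (hv : v < n) :
    Aent n 1 β u v =
      if n - 1 ≤ u + v then
        (v.choose (n - 1 - u) : ℝ) * (1 - β) ^ (u + v - (n - 1)) * β ^ (n - 1 - u)
      else 0 := by
  unfold Aent
  split_ifs with h
  · rw [Finset.sum_eq_single_of_mem (n - 1 - u)]
    · have h1 : n - 1 - u + u - v = n - 1 - v := by omega
      have h2 : n - 1 - u - (n - 1 - u) = 0 := by omega
      have h3 : v - (n - 1 - u) = u + v - (n - 1) := by omega
      rw [h1, h2, h3, Nat.choose_self, sub_self]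
      norm_num
    · simp only [Finset.mem_Icc]
      omega
    · intro i hi hne
      simp only [Finset.mem_Icc] at hi
      have : (1 - (1:ℝ)) ^ (n - 1 - u - i) = 0 := by
        rw [sub_self]
        exact zero_pow (by omega)
      rw [this, mul_zero]
  · apply Finset.sum_eq_zero
    intro i hi
    simp only [Finset.mem_Icc] at hi
    have : (1 - (1:ℝ)) ^ (n - 1 - u - i) = 0 := by
      rw [sub_self]
      exact zero_pow (by omega)
    rw [this, mul_zero]

lemma sign_revPerm (n : ℕ) :
    Equiv.Perm.sign (Fin.revPerm : Equiv.Perm (Fin n)) = (-1) ^ (n * (n - 1) / 2) := by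
  induction n with
  | zero =>
    have : (Fin.revPerm : Equiv.Perm (Fin 0)) = 1 := by
      ext i
      exact i.elim0
    simp [this]
  | succ n ih =>
    have key : (Fin.revPerm : Equiv.Perm (Fin (n + 1))) =
        Equiv.Perm.decomposeFin.symm (0, Fin.revPerm) * finRotate (n + 1) := by
      ext i
      refine Fin.lastCases ?_ (fun j => ?_) i
      · simp [Fin.rev_last, finRotate_last]
      · simp only [Equiv.Perm.mul_apply, finRotate_succ_apply, Fin.coeSucc_eq_succ,
          Equiv.Perm.decomposeFin_symm_apply_succ, Equiv.swap_self, Fin.revPerm_apply,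
          Fin.rev_castSucc, Equiv.refl_apply]
    rw [key, map_mul, Equiv.Perm.decomposeFin.symm_sign, sign_finRotate, ih]
    have h4 : (n + 1) * (n + 1 - 1) = n * (n - 1) + 2 * n := by
      cases n with
      | zero => rfl
      | succ m => simp only [Nat.succ_sub_one]; ring
    have : n * (n - 1) / 2 + n = (n + 1) * (n + 1 - 1) / 2 := by omega
    simp [← pow_add, this]

theorem Amat_alpha_one (n : ℕ) (hn : 1 ≤ n) (β : ℝ) (hβ : β ∈ Set.Ioo (0 : ℝ) 1) :
    (∀ u v : Fin n, Amat n 1 β u v =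
      if n - 1 ≤ (u : ℕ) + (v : ℕ) then
        ((v : ℕ).choose (n - 1 - (u : ℕ)) : ℝ) *
          (1 - β) ^ ((u : ℕ) + (v : ℕ) - (n - 1)) * β ^ (n - 1 - (u : ℕ))
      else 0) ∧
    (Amat n 1 β).det = (-β) ^ (n * (n - 1) / 2) := by
  have hent : ∀ u v : Fin n, Amat n 1 β u v =
      if n - 1 ≤ (u : ℕ) + (v : ℕ) then
        ((v : ℕ).choose (n - 1 - (u : ℕ)) : ℝ) *
          (1 - β) ^ ((u : ℕ) + (v : ℕ) - (n - 1)) * β ^ (n - 1 - (u : ℕ))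
      else 0 := fun u v => aent_alpha_one n β u v u.isLt v.isLt
  refine ⟨hent, ?_⟩
  have htri : ((Amat n 1 β).submatrix Fin.revPerm id).BlockTriangular id := by
    intro i j hij
    simp only [Matrix.submatrix_apply, id, Fin.revPerm_apply]
    rw [hent]
    rw [if_neg]
    have hrv : ((Fin.rev i : Fin n) : ℕ) = n - ((i : ℕ) + 1) := Fin.val_rev i
    have hi := i.isLt
    have hj := j.isLt
    simp only [id] at hij
    omega
  have hdetB : ((Amat n 1 β).submatrix Fin.revPerm id).det = β ^ (n * (n - 1) / 2) := by
    rw [Matrix.det_of_upperTriangular htri]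
    have hdiag : ∀ u : Fin n, ((Amat n 1 β).submatrix Fin.revPerm id) u u = β ^ (u : ℕ) := by
      intro u
      simp only [Matrix.submatrix_apply, id, Fin.revPerm_apply]
      rw [hent]
      have hrv : ((Fin.rev u : Fin n) : ℕ) = n - ((u : ℕ) + 1) := Fin.val_rev u
      have hu := u.isLt
      rw [if_pos (by omega)]
      have h1 : n - 1 - ((Fin.rev u : Fin n) : ℕ) = (u : ℕ) := by omega
      have h2 : ((Fin.rev u : Fin n) : ℕ) + (u : ℕ) - (n - 1) = 0 := by omega
      rw [h1, h2, Nat.choose_self]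
      norm_num
    rw [Finset.prod_congr rfl (fun u _ => hdiag u), Finset.prod_pow_eq_pow_sum]
    congr 1
    rw [Fin.sum_univ_eq_sum_range (fun i => i) n, Finset.sum_range_id]
  have hperm := Matrix.det_permute (Fin.revPerm : Equiv.Perm (Fin n)) (Amat n 1 β)
  rw [hdetB, sign_revPerm] at hperm
  push_cast at hperm
  rw [neg_pow]
  have hsq : ((-1 : ℝ) ^ (n * (n - 1) / 2)) * ((-1 : ℝ) ^ (n * (n - 1) / 2)) = 1 := by
    rw [← mul_pow]; norm_num
  calc (Amat n 1 β).det
      = ((-1 : ℝ) ^ (n * (n - 1) / 2) * (-1 : ℝ) ^ (n * (n - 1) / 2)) * (Amat n 1 β).det := by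
        rw [hsq, one_mul]
    _ = (-1 : ℝ) ^ (n * (n - 1) / 2) * ((-1 : ℝ) ^ (n * (n - 1) / 2) * (Amat n 1 β).det) := by ring
    _ = (-1 : ℝ) ^ (n * (n - 1) / 2) * β ^ (n * (n - 1) / 2) := by rw [← hperm]
end

section
/- Let B = A(n, α, β)^T with entries a^n_{ij}. Define the transformed matrix with entries: row 1 scaled as a^n_{1j} (1-α-β)^{n-1}/(1-α)^{n-1}; row 2 as (a^n_{2j} - a^n_{21} a^n_{1j}/a^n_{11})(1-α)/(1-α-β); and rows i = 3,…,n as (a^n_{ij} - (β/(1-α)) a^n_{i-1,j})(1-α)/(1-α-β). Then the transformed matrix has block form with (1,1)-entry (1-α-β)^{n-1}, zeros below it in the first column, and lower-right (n-1)×(n-1) block equal to A(n-1, α, β)^T. -/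
open Finset

/-- The row-transformation of `A(n,α,β)ᵀ` from the inductive determinant proof. -/
noncomputable def transf (n : ℕ) (α β : ℝ) : Matrix (Fin n) (Fin n) ℝ :=
  fun i j =>
    let B := (Amat n α β).transpose
    if (i : ℕ) = 0 then B i j * (1 - α - β) ^ (n - 1) / (1 - α) ^ (n - 1)
    else if (i : ℕ) = 1 then
      (B i j - B i ⟨0, i.pos⟩ * B ⟨0, i.pos⟩ j / B ⟨0, i.pos⟩ ⟨0, i.pos⟩) *
        (1 - α) / (1 - α - β)
    else
      (B i j - β / (1 - α) *
          B ⟨(i : ℕ) - 1, lt_of_le_of_lt (Nat.sub_le _ _) i.isLt⟩ j) *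
        (1 - α) / (1 - α - β)


noncomputable def Eterm (α β : ℝ) (m u v k : ℕ) : ℝ :=
  if v ≤ k + u ∧ k ≤ v ∧ k + u ≤ m then
    (v.choose k : ℝ) * (1 - β) ^ (v - k) * β ^ k *
      ((m - v).choose (k + u - v) : ℝ) * α ^ (k + u - v) * (1 - α) ^ (m - u - k)
  else 0

lemma Aent_eq_sum (n : ℕ) (α β : ℝ) (u v : ℕ) (hn : 1 ≤ n) (hu : u ≤ n - 1)
    (hv : v ≤ n - 1) :
    Aent n α β u v = ∑ k ∈ Finset.range n, Eterm α β (n - 1) u v k := by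
  rw [Aent]
  unfold Eterm
  rw [← Finset.sum_filter]
  apply Finset.sum_congr
  · ext k
    simp only [Finset.mem_Icc, Finset.mem_filter, Finset.mem_range, min_le_iff, le_min_iff]
    omega
  · intro x _; rfl

lemma LB (α β : ℝ) (m u v k : ℕ) (hv : v + 1 ≤ m) :
    Eterm α β m (u + 1) v k =
      (1 - α) * Eterm α β (m - 1) (u + 1) v k + α * Eterm α β (m - 1) u v k := by
  unfold Eterm
  by_cases hL : v ≤ k + (u + 1) ∧ k ≤ v ∧ k + (u + 1) ≤ m
  · rw [if_pos hL]
    by_cases h3 : v ≤ k + u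
    · by_cases h4 : k + (u + 1) ≤ m - 1
      · rw [if_pos (⟨hL.1, hL.2.1, h4⟩ :
              v ≤ k + (u + 1) ∧ k ≤ v ∧ k + (u + 1) ≤ m - 1),
            if_pos (show v ≤ k + u ∧ k ≤ v ∧ k + u ≤ m - 1 from ⟨h3, hL.2.1, by omega⟩)]
        rw [show k + (u + 1) - v = (k + u - v) + 1 from by omega,
            show m - v = (m - 1 - v) + 1 from by omega,
            Nat.choose_succ_succ,
            show m - (u + 1) - k = ((m - 1) - (u + 1) - k) + 1 from by omega,
            show m - 1 - u - k = ((m - 1) - (u + 1) - k) + 1 from by omega]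
        push_cast
        ring
      · rw [if_neg (show ¬(v ≤ k + (u + 1) ∧ k ≤ v ∧ k + (u + 1) ≤ m - 1) from by omega),
            if_pos (show v ≤ k + u ∧ k ≤ v ∧ k + u ≤ m - 1 from ⟨h3, hL.2.1, by omega⟩)]
        rw [show k + (u + 1) - v = (k + u - v) + 1 from by omega,
            show m - (u + 1) - k = 0 from by omega,
            show m - 1 - u - k = 0 from by omega,
            show m - v = (k + u - v) + 1 from by omega,
            show m - 1 - v = k + u - v from by omega,
            Nat.choose_self, Nat.choose_self]
        push_cast
        ring
    · rw [if_pos (show v ≤ k + (u + 1) ∧ k ≤ v ∧ k + (u + 1) ≤ m - 1 from by omega),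
          if_neg (show ¬(v ≤ k + u ∧ k ≤ v ∧ k + u ≤ m - 1) from by omega)]
      rw [show k + (u + 1) - v = 0 from by omega,
          show m - (u + 1) - k = ((m - 1) - (u + 1) - k) + 1 from by omega]
      simp only [Nat.choose_zero_right]
      push_cast
      ring
  · rw [if_neg hL,
        if_neg (show ¬(v ≤ k + (u + 1) ∧ k ≤ v ∧ k + (u + 1) ≤ m - 1) from by omega),
        if_neg (show ¬(v ≤ k + u ∧ k ≤ v ∧ k + u ≤ m - 1) from by omega)]
    ring

lemma LA (α β : ℝ) (m u v k : ℕ) (hm : 1 ≤ m) :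
    Eterm α β m (u + 1) (v + 1) k =
      (1 - β) * Eterm α β (m - 1) u v k +
        β * (if k = 0 then 0 else Eterm α β (m - 1) (u + 1) v (k - 1)) := by
  rcases k with _ | k
  · rw [if_pos rfl, mul_zero, add_zero]
    unfold Eterm
    by_cases hL : v + 1 ≤ 0 + (u + 1) ∧ 0 ≤ v + 1 ∧ 0 + (u + 1) ≤ m
    · rw [if_pos hL,
          if_pos (show v ≤ 0 + u ∧ 0 ≤ v ∧ 0 + u ≤ m - 1 from by omega)]
      rw [show 0 + (u + 1) - (v + 1) = 0 + u - v from by omega,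
          show m - (v + 1) = m - 1 - v from by omega,
          show m - (u + 1) - 0 = m - 1 - u - 0 from by omega,
          show v + 1 - 0 = (v - 0) + 1 from by omega]
      simp only [Nat.choose_zero_right]
      push_cast
      ring
    · rw [if_neg hL,
          if_neg (show ¬(v ≤ 0 + u ∧ 0 ≤ v ∧ 0 + u ≤ m - 1) from by omega)]
      ring
  · rw [if_neg (Nat.succ_ne_zero k), Nat.add_sub_cancel]
    unfold Eterm
    by_cases hL : v + 1 ≤ k + 1 + (u + 1) ∧ k + 1 ≤ v + 1 ∧ k + 1 + (u + 1) ≤ m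
    · rw [if_pos hL]
      by_cases h3 : k + 1 ≤ v
      · rw [if_pos (show v ≤ k + 1 + u ∧ k + 1 ≤ v ∧ k + 1 + u ≤ m - 1 from by omega),
            if_pos (show v ≤ k + (u + 1) ∧ k ≤ v ∧ k + (u + 1) ≤ m - 1 from by omega)]
        rw [show v + 1 - (k + 1) = (v - (k + 1)) + 1 from by omega,
            show v - k = (v - (k + 1)) + 1 from by omega,
            Nat.choose_succ_succ v k,
            show k + 1 + (u + 1) - (v + 1) = k + (u + 1) - v from by omega,
            show k + 1 + u - v = k + (u + 1) - v from by omega,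
            show m - (v + 1) = m - 1 - v from by omega,
            show m - (u + 1) - (k + 1) = m - 1 - (u + 1) - k from by omega,
            show m - 1 - u - (k + 1) = m - 1 - (u + 1) - k from by omega]
        simp only [Nat.succ_eq_add_one]
        push_cast
        ring
      · rw [if_neg (show ¬(v ≤ k + 1 + u ∧ k + 1 ≤ v ∧ k + 1 + u ≤ m - 1) from by omega),
            if_pos (show v ≤ k + (u + 1) ∧ k ≤ v ∧ k + (u + 1) ≤ m - 1 from by omega)]
        rw [show (v + 1).choose (k + 1) = 1 from by
              rw [show k = v from by omega]; exact Nat.choose_self _,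
            show v.choose k = 1 from by
              rw [show k = v from by omega]; exact Nat.choose_self _,
            show v + 1 - (k + 1) = 0 from by omega,
            show v - k = 0 from by omega,
            show k + 1 + (u + 1) - (v + 1) = k + (u + 1) - v from by omega,
            show m - (v + 1) = m - 1 - v from by omega,
            show m - (u + 1) - (k + 1) = m - 1 - (u + 1) - k from by omega]
        push_cast
        ring
    · rw [if_neg hL,
          if_neg (show ¬(v ≤ k + 1 + u ∧ k + 1 ≤ v ∧ k + 1 + u ≤ m - 1) from by omega),
          if_neg (show ¬(v ≤ k + (u + 1) ∧ k ≤ v ∧ k + (u + 1) ≤ m - 1) from by omega)]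
      ring

lemma master (α β : ℝ) (m u v : ℕ) (hm : 1 ≤ m) (hu : u + 1 ≤ m) (hv : v + 1 ≤ m) :
    (1 - α) * Aent (m + 1) α β (u + 1) (v + 1) - β * Aent (m + 1) α β (u + 1) v =
      (1 - α - β) * Aent m α β u v := by
  have hend : ∀ w, Eterm α β (m - 1) w v m = 0 := by
    intro w
    unfold Eterm
    rw [if_neg (by omega)]
  rw [Aent_eq_sum (m + 1) α β (u + 1) (v + 1) (by omega) (by omega) (by omega),
      Aent_eq_sum (m + 1) α β (u + 1) v (by omega) (by omega) (by omega),
      Aent_eq_sum m α β u v hm (by omega) (by omega)]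
  simp only [Nat.add_sub_cancel]
  set S3 : ℝ := ∑ k ∈ Finset.range (m + 1), Eterm α β (m - 1) u v k with hS3
  set S4 : ℝ := ∑ k ∈ Finset.range (m + 1), Eterm α β (m - 1) (u + 1) v k with hS4
  have hshift : ∑ k ∈ Finset.range (m + 1),
      (if k = 0 then (0 : ℝ) else Eterm α β (m - 1) (u + 1) v (k - 1)) = S4 := by
    rw [Finset.sum_range_succ' _ m]
    simp only [Nat.succ_ne_zero, if_neg, Nat.add_sub_cancel, reduceCtorEq, ite_false,
      if_true, add_zero]
    rw [hS4, Finset.sum_range_succ, hend (u + 1), add_zero]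
  have h1 : ∑ k ∈ Finset.range (m + 1), Eterm α β m (u + 1) (v + 1) k
      = (1 - β) * S3 + β * S4 := by
    calc ∑ k ∈ Finset.range (m + 1), Eterm α β m (u + 1) (v + 1) k
        = ∑ k ∈ Finset.range (m + 1), ((1 - β) * Eterm α β (m - 1) u v k +
            β * (if k = 0 then 0 else Eterm α β (m - 1) (u + 1) v (k - 1))) :=
          Finset.sum_congr rfl fun k _ => LA α β m u v k hm
      _ = (1 - β) * S3 + β * S4 := by
          rw [Finset.sum_add_distrib, ← Finset.mul_sum, ← Finset.mul_sum, hshift]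
  have h2 : ∑ k ∈ Finset.range (m + 1), Eterm α β m (u + 1) v k
      = (1 - α) * S4 + α * S3 := by
    calc ∑ k ∈ Finset.range (m + 1), Eterm α β m (u + 1) v k
        = ∑ k ∈ Finset.range (m + 1), ((1 - α) * Eterm α β (m - 1) (u + 1) v k +
            α * Eterm α β (m - 1) u v k) :=
          Finset.sum_congr rfl fun k _ => LB α β m u v k hv
      _ = (1 - α) * S4 + α * S3 := by
          rw [Finset.sum_add_distrib, ← Finset.mul_sum, ← Finset.mul_sum]
  rw [h1, h2]
  have hS3' : S3 = ∑ k ∈ Finset.range m, Eterm α β (m - 1) u v k := by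
    rw [hS3, Finset.sum_range_succ, hend u, add_zero]
  rw [← hS3']
  ring

lemma master' (α β : ℝ) (n u v : ℕ) (hn : 2 ≤ n) (hu : u + 1 ≤ n - 1) (hv : v + 1 ≤ n - 1) :
    (1 - α) * Aent n α β (u + 1) (v + 1) - β * Aent n α β (u + 1) v =
      (1 - α - β) * Aent (n - 1) α β u v := by
  have h := master α β (n - 1) u v (by omega) hu hv
  rwa [Nat.sub_add_cancel (by omega : 1 ≤ n)] at h

lemma Aent_zero_left (n : ℕ) (α β : ℝ) (i : ℕ) (hi : i ≤ n - 1) :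
    Aent n α β 0 i = β ^ i * (1 - α) ^ (n - 1 - i) := by
  unfold Aent
  rw [Nat.sub_zero, Nat.sub_zero, min_eq_left hi, Finset.Icc_self, Finset.sum_singleton]
  simp [Nat.choose_self, Nat.sub_self]

theorem transf_block_form (n : ℕ) (hn : 2 ≤ n) (α β : ℝ)
    (hα : α ∈ Set.Ioo (0 : ℝ) 1) (hβ : β ∈ Set.Ioo (0 : ℝ) 1) (hab : α + β ≠ 1) :
    transf n α β ⟨0, by omega⟩ ⟨0, by omega⟩ = (1 - α - β) ^ (n - 1) ∧
    (∀ i : Fin n, (i : ℕ) ≠ 0 → transf n α β i ⟨0, by omega⟩ = 0) ∧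
    (∀ i j : Fin (n - 1),
      transf n α β ⟨(i : ℕ) + 1, by have := i.isLt; omega⟩
          ⟨(j : ℕ) + 1, by have := j.isLt; omega⟩ =
        (Amat (n - 1) α β).transpose i j) := by
  have hα1 : (1 : ℝ) - α ≠ 0 := by have := hα.2; intro h; linarith
  have habs : (1 : ℝ) - α - β ≠ 0 := by intro h; exact hab (by linarith)
  have hA00 : Aent n α β 0 0 = (1 - α) ^ (n - 1) := by
    rw [Aent_zero_left n α β 0 (by omega)]; simp
  have hA01 : Aent n α β 0 1 = β * (1 - α) ^ (n - 2) := by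
    rw [Aent_zero_left n α β 1 (by omega), pow_one,
        show n - 1 - 1 = n - 2 from by omega]
  have hpow : ((1 : ℝ) - α) ^ (n - 1) ≠ 0 := pow_ne_zero _ hα1
  have hpow2 : ((1 : ℝ) - α) ^ (n - 2) ≠ 0 := pow_ne_zero _ hα1
  have hpow1 : ((1 : ℝ) - α) ^ (n - 1) = (1 - α) ^ (n - 2) * (1 - α) := by
    rw [← pow_succ]; congr 1; omega
  refine ⟨?_, ?_, ?_⟩
  · simp only [transf, Matrix.transpose_apply, Amat, ite_true, eq_self_iff_true]
    rw [hA00, mul_comm, mul_div_assoc, div_self hpow, mul_one]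
  · intro i hi
    simp only [transf, Matrix.transpose_apply, Amat, if_neg hi]
    by_cases hi1 : (i : ℕ) = 1
    · rw [if_pos hi1, hA00]
      have hx : ∀ X : ℝ, X - X * ((1 - α) ^ (n - 1)) / ((1 - α) ^ (n - 1)) = 0 :=
        fun X => by field_simp; ring
      rw [hx, zero_mul, zero_div]
    · rw [if_neg hi1]
      have hile : (i : ℕ) ≤ n - 1 := by have := i.isLt; omega
      rw [Aent_zero_left n α β (i : ℕ) hile,
          Aent_zero_left n α β ((i : ℕ) - 1) (by omega)]
      obtain ⟨a, ha⟩ : ∃ a, (i : ℕ) = a + 1 := ⟨(i : ℕ) - 1, by omega⟩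
      rw [ha, Nat.add_sub_cancel, show n - 1 - a = (n - 1 - (a + 1)) + 1 from by omega]
      field_simp
      ring
  · intro i j
    have hij := i.isLt
    have hjj := j.isLt
    by_cases hiz : (i : ℕ) = 0
    · have key := master' α β n (j : ℕ) 0 hn (by omega) (by omega)
      simp only [transf, Matrix.transpose_apply, Amat]
      norm_num [hiz]
      norm_num at key
      have e : Aent n α β 0 1 * Aent n α β (↑j + 1) 0 / Aent n α β 0 0 =
          β / (1 - α) * Aent n α β (↑j + 1) 0 := by
        rw [hA00, hA01, hpow1]
        field_simp
      rw [e, div_eq_iff habs]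
      field_simp
      linear_combination key
    · have key := master' α β n (j : ℕ) (i : ℕ) hn (by omega) (by omega)
      simp only [transf, Matrix.transpose_apply, Amat]
      norm_num
      rw [if_neg (by omega)]
      rw [div_eq_iff habs]
      field_simp
      linear_combination key
end

section
/- The determinant of A(n, α, β)^T satisfies the recursion det A(n,α,β)^T = (1-α-β)^{n-1} · det A(n-1,α,β)^T for all n ≥ 2 and α, β ∈ (0,1) with α + β ≠ 1. -/
open Finset

namespace DetRecAux

open Polynomial

lemma coeff_linear_pow (a b : ℝ) (m k : ℕ) :
    ((C a * X + C b) ^ m).coeff k =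
      if k ≤ m then (m.choose k : ℝ) * a ^ k * b ^ (m - k) else 0 := by
  rw [add_pow, finset_sum_coeff]
  rw [Finset.sum_eq_single k]
  · by_cases h : k ≤ m
    · simp only [if_pos h, mul_pow, ← C_pow, ← C_eq_natCast]
      rw [show C (a^k) * X^k * C (b^(m-k)) * C ((m.choose k : ℝ)) =
        C (a^k * b^(m-k) * (m.choose k : ℝ)) * X^k by simp only [C_mul]; ring]
      rw [coeff_C_mul, coeff_X_pow, if_pos rfl]
      ring
    · rw [if_neg h, Nat.choose_eq_zero_of_lt (by omega)]
      simp
  · intro i _ hik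
    simp only [mul_pow, ← C_pow, ← C_eq_natCast]
    rw [show C (a^i) * X^i * C (b^(m-i)) * C ((m.choose i : ℝ)) =
        C (a^i * b^(m-i) * (m.choose i : ℝ)) * X^i by simp only [C_mul]; ring]
    rw [coeff_C_mul, coeff_X_pow, if_neg (fun hh => hik hh.symm), mul_zero]
  · intro h
    simp only [Finset.mem_range, not_lt] at h
    rw [Nat.choose_eq_zero_of_lt (by omega)]
    simp

/-- The generating polynomial of a column of `Amat`. -/
noncomputable def gP (β : ℝ) : ℝ[X] := C (1 - β) * X + C β

noncomputable def hP (α : ℝ) : ℝ[X] := C α * X + C (1 - α)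

lemma Aent_eq_coeff (n : ℕ) (α β : ℝ) (u v : ℕ) (hu : u ≤ n - 1) (hv : v ≤ n - 1) :
    Aent n α β u v = (gP β ^ v * hP α ^ (n - 1 - v)).coeff u := by
  unfold Aent gP hP
  rw [coeff_mul, Finset.Nat.sum_antidiagonal_eq_sum_range_succ_mk]
  simp only [coeff_linear_pow]
  rw [show (∑ k ∈ range (u + 1),
      (if k ≤ v then (v.choose k : ℝ) * (1-β)^k * β^(v-k) else 0) *
      (if u - k ≤ n-1-v then ((n-1-v).choose (u-k) : ℝ) * α^(u-k) * (1-α)^(n-1-v-(u-k)) else 0)) =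
      ∑ k ∈ Finset.Icc (u - (n-1-v)) (min u v),
      (if k ≤ v then (v.choose k : ℝ) * (1-β)^k * β^(v-k) else 0) *
      (if u - k ≤ n-1-v then ((n-1-v).choose (u-k) : ℝ) * α^(u-k) * (1-α)^(n-1-v-(u-k)) else 0)
    from (Finset.sum_subset (fun k hk => by simp only [mem_Icc, mem_range] at *; omega)
      (fun k hk hnot => by
        simp only [mem_range] at hk
        simp only [mem_Icc, not_and_or, not_le] at hnot
        by_cases hkv : k ≤ v
        · rw [if_neg (show ¬(u - k ≤ n - 1 - v) by omega), mul_zero]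
        · rw [if_neg hkv, zero_mul])).symm]
  refine Finset.sum_nbij' (fun i => v - i) (fun k => v - k) ?_ ?_ ?_ ?_ ?_
  · intro i hi; simp only [mem_Icc, le_min_iff, min_le_iff] at hi ⊢; omega
  · intro k hk; simp only [mem_Icc, le_min_iff, min_le_iff] at hk ⊢; omega
  · intro i hi; simp only [mem_Icc, le_min_iff, min_le_iff] at hi; show v - (v - i) = i; omega
  · intro k hk; simp only [mem_Icc, le_min_iff, min_le_iff] at hk; show v - (v - k) = k; omega
  · intro i hi
    simp only [mem_Icc, le_min_iff, min_le_iff] at hi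
    rw [if_pos (show v - i ≤ v by omega), if_pos (show u - (v - i) ≤ n - 1 - v by omega)]
    have h1 : v - (v - i) = i := by omega
    have h2 : u - (v - i) = i + u - v := by omega
    have h3 : n - 1 - v - (i + u - v) = n - 1 - u - i := by omega
    rw [h1, h2, h3, Nat.choose_symm (by omega)]
    ring

lemma gP_sub_hP (α β : ℝ) : gP β - hP α = C (1 - α - β) * (X - 1) := by
  unfold gP hP
  have h1 : C (1 - β) = 1 - C β := by rw [C_sub, C_1]
  have h2 : C (1 - α) = 1 - C α := by rw [C_sub, C_1]
  have h3 : C (1 - α - β) = 1 - C α - C β := by rw [C_sub, C_sub, C_1]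
  rw [h1, h2, h3]; ring

lemma diff_eq (α β : ℝ) (m v : ℕ) (hv : v ≤ m) :
    gP β ^ (v + 1) * hP α ^ (m + 1 - (v + 1)) - gP β ^ v * hP α ^ (m + 1 - v) =
      C (1 - α - β) * ((X - 1) * (gP β ^ v * hP α ^ (m - v))) := by
  have h1 : m + 1 - (v + 1) = m - v := by omega
  have h2 : m + 1 - v = (m - v) + 1 := by omega
  rw [h1, h2, pow_succ, pow_succ]
  linear_combination (gP β ^ v * hP α ^ (m - v)) * gP_sub_hP α β

lemma natDegree_gP_le (β : ℝ) : (gP β).natDegree ≤ 1 := by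
  unfold gP; exact natDegree_linear_le

lemma natDegree_hP_le (α : ℝ) : (hP α).natDegree ≤ 1 := by
  unfold hP; exact natDegree_linear_le

lemma natDegree_prod_le (α β : ℝ) (v w : ℕ) :
    (gP β ^ v * hP α ^ w).natDegree ≤ v + w := by
  refine le_trans natDegree_mul_le (add_le_add (le_trans natDegree_pow_le ?_)
    (le_trans natDegree_pow_le ?_))
  · simpa using Nat.mul_le_mul_left v (natDegree_gP_le β)
  · simpa using Nat.mul_le_mul_left w (natDegree_hP_le α)

lemma coeff_X_sub_one_mul_succ (q : ℝ[X]) (k : ℕ) :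
    ((X - 1) * q).coeff (k + 1) = q.coeff k - q.coeff (k + 1) := by
  rw [sub_mul, one_mul, coeff_sub, coeff_X_mul]

lemma coeff_X_sub_one_mul_zero (q : ℝ[X]) :
    ((X - 1) * q).coeff 0 = -(q.coeff 0) := by
  rw [sub_mul, one_mul, coeff_sub, mul_coeff_zero, coeff_X_zero, zero_mul, zero_sub]

/-- The matrix after row-differencing. -/
noncomputable def Mmat (m : ℕ) (α β : ℝ) : Matrix (Fin (m + 2)) (Fin (m + 2)) ℝ :=
  Fin.cases (fun u => (hP α ^ (m + 1)).coeff u)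
    (fun v u => (C (1 - α - β) * ((X - 1) * (gP β ^ (v : ℕ) * hP α ^ (m - (v : ℕ))))).coeff u)

/-- The matrix after additionally taking cumulative column sums. -/
noncomputable def Nmat (m : ℕ) (α β : ℝ) : Matrix (Fin (m + 2)) (Fin (m + 2)) ℝ :=
  Fin.cases (fun u => ∑ j ∈ range ((u : ℕ) + 1), (hP α ^ (m + 1)).coeff j)
    (fun v u => -((1 - α - β) * (gP β ^ (v : ℕ) * hP α ^ (m - (v : ℕ))).coeff u))

end DetRecAux

open DetRecAux Polynomial

theorem det_transpose_recursion (n : ℕ) (hn : 2 ≤ n) (α β : ℝ)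
    (hα : α ∈ Set.Ioo (0 : ℝ) 1) (hβ : β ∈ Set.Ioo (0 : ℝ) 1) (hab : α + β ≠ 1) :
    ((Amat n α β).transpose).det =
      (1 - α - β) ^ (n - 1) * ((Amat (n - 1) α β).transpose).det := by
  obtain ⟨m, rfl⟩ : ∃ m, n = m + 2 := ⟨n - 2, by omega⟩
  have hB : ∀ v u : Fin (m + 2),
      (Amat (m + 2) α β).transpose v u = (gP β ^ (v : ℕ) * hP α ^ (m + 1 - (v : ℕ))).coeff u := by
    intro v u
    show Aent (m + 2) α β u v = _
    exact Aent_eq_coeff (m + 2) α β u v (by omega) (by omega)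
  -- Step 1: row operations
  have step1 : ((Amat (m + 2) α β).transpose).det = (Mmat m α β).det := by
    apply Matrix.det_eq_of_forall_row_eq_smul_add_pred (c := fun _ => 1)
    · intro j
      rw [hB]
      simp only [Mmat, Fin.cases_zero, Fin.val_zero, pow_zero, one_mul, Nat.sub_zero]
    · intro i j
      rw [hB, hB]
      simp only [Mmat, Fin.cases_succ, Fin.val_succ, Fin.coe_castSucc, one_mul]
      rw [← diff_eq α β m i (by omega), coeff_sub]
      ring
  -- Step 2: column operations
  have step2 : (Nmat m α β).det = (Mmat m α β).det := by
    apply Matrix.det_eq_of_forall_col_eq_smul_add_pred (c := fun _ => 1)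
    · intro i
      induction i using Fin.cases with
      | zero =>
        simp only [Nmat, Mmat, Fin.cases_zero, Fin.val_zero, zero_add, range_one, sum_singleton]
      | succ v =>
        simp only [Nmat, Mmat, Fin.cases_succ, Fin.val_zero, coeff_C_mul,
          coeff_X_sub_one_mul_zero]
        ring
    · intro i j
      induction i using Fin.cases with
      | zero =>
        simp only [Nmat, Fin.cases_zero, Mmat, Fin.val_succ, Fin.coe_castSucc, one_mul]
        rw [Finset.sum_range_succ]
        ring
      | succ v =>
        simp only [Nmat, Mmat, Fin.cases_succ, Fin.val_succ, Fin.coe_castSucc, one_mul,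
          coeff_C_mul, coeff_X_sub_one_mul_succ]
        ring
  -- Step 3: cofactor expansion along the last column
  have hlast : ∀ v : Fin (m + 1), Nmat m α β v.succ (Fin.last (m + 1)) = 0 := by
    intro v
    simp only [Nmat, Fin.cases_succ, Fin.val_last]
    rw [coeff_eq_zero_of_natDegree_lt (lt_of_le_of_lt (natDegree_prod_le α β _ _) (by omega))]
    ring
  have h0last : Nmat m α β 0 (Fin.last (m + 1)) = 1 := by
    simp only [Nmat, Fin.cases_zero, Fin.val_last]
    have hdeg : (hP α ^ (m + 1)).natDegree < m + 1 + 1 := by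
      have h1 := natDegree_pow_le (p := hP α) (n := m + 1)
      have h2 := Nat.mul_le_mul_left (m + 1) (natDegree_hP_le α)
      omega
    have he := Polynomial.eval_eq_sum_range' hdeg (1 : ℝ)
    simp only [one_pow, mul_one] at he
    rw [← he, eval_pow]
    have : (hP α).eval 1 = 1 := by unfold hP; simp
    rw [this, one_pow]
  rw [step1, ← step2, Matrix.det_succ_column (Nmat m α β) (Fin.last (m + 1))]
  rw [Finset.sum_eq_single 0]
  · rw [h0last]
    have hsub : (Nmat m α β).submatrix (Fin.succAbove 0) (Fin.succAbove (Fin.last (m + 1)))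
        = (-(1 - α - β)) • (Amat (m + 1) α β).transpose := by
      ext i j
      simp only [Matrix.submatrix_apply, Fin.zero_succAbove, Fin.succAbove_last,
        Matrix.smul_apply, Matrix.transpose_apply, smul_eq_mul]
      simp only [Nmat, Fin.cases_succ, Fin.coe_castSucc]
      rw [show Amat (m + 1) α β j i = Aent (m + 1) α β j i from rfl,
        Aent_eq_coeff (m + 1) α β j i (by omega) (by omega)]
      simp only [Nat.add_sub_cancel, Nat.add_sub_cancel_left]
      ring
    rw [hsub, Matrix.det_smul]
    have e1 : m + 2 - 1 = m + 1 := rfl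
    rw [e1]
    simp only [Fin.val_zero, Fin.val_last, zero_add, smul_eq_mul, mul_one, Fintype.card_fin]
    rw [show ((-1 : ℝ)) ^ (m + 1) * ((-(1 - α - β)) ^ (m + 1) * ((Amat (m + 1) α β).transpose).det)
        = ((-1 : ℝ) * (-(1 - α - β))) ^ (m + 1) * ((Amat (m + 1) α β).transpose).det from by
      rw [mul_pow]; ring]
    norm_num
  · intro i _ hi0
    obtain ⟨v, rfl⟩ := Fin.eq_succ_of_ne_zero hi0
    rw [hlast v]
    ring
  · intro h
    exact absurd (Finset.mem_univ 0) h
end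

section
/- Semigroup property: for α₁, α₂, β₁, β₂ ∈ [0,1], the product A(n, α₂, β₂) · A(n, α₁, β₁) equals A(n, α, β) where α = α₁(1-β₂) + (1-α₁)α₂ and β = β₁(1-α₂) + (1-β₁)β₂. -/
open Finset

open Polynomial in
noncomputable def Ppoly (N : ℕ) (α β : ℝ) (v : ℕ) : Polynomial ℝ :=
  (C β + C (1 - β) * X) ^ v * (C α * X + C (1 - α)) ^ (N - v)

/-- Expand a product of two binomial powers and collect by the total power of `Q`. -/
lemma key {R : Type*} [CommRing R] (a b c d Q S : R) (v m : ℕ) :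
    (b * S + a * Q) ^ v * (c * Q + d * S) ^ m =
    ∑ w ∈ Finset.range (v + m + 1),
      (∑ i ∈ Finset.Icc (v - w) (min v (v + m - w)),
        (v.choose i : R) * a ^ (v - i) * b ^ i *
          ((v + m - v).choose (i + w - v) : R) * c ^ (i + w - v) * d ^ (v + m - w - i)) *
        Q ^ w * S ^ (v + m - w) := by
  rw [add_pow, add_pow, Finset.sum_mul_sum]
  simp only [Finset.sum_mul]
  rw [Finset.sum_sigma', Finset.sum_sigma']
  refine Finset.sum_nbij' (fun p => ⟨v - p.1 + p.2, p.1⟩) (fun p => ⟨p.2, p.2 + p.1 - v⟩)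
    ?_ ?_ ?_ ?_ ?_
  · rintro ⟨x, y⟩ hp
    simp only [Finset.mem_sigma, Finset.mem_range, Finset.mem_Icc, Nat.lt_succ_iff,
      le_min_iff] at hp ⊢
    omega
  · rintro ⟨x, y⟩ hp
    simp only [Finset.mem_sigma, Finset.mem_range, Finset.mem_Icc, Nat.lt_succ_iff,
      le_min_iff] at hp ⊢
    omega
  · rintro ⟨x, y⟩ hp
    simp only [Finset.mem_sigma, Finset.mem_range, Finset.mem_Icc, Nat.lt_succ_iff,
      le_min_iff] at hp
    dsimp only
    rw [show x + (v - x + y) - v = y by omega]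
  · rintro ⟨x, y⟩ hp
    simp only [Finset.mem_sigma, Finset.mem_range, Finset.mem_Icc, Nat.lt_succ_iff,
      le_min_iff] at hp
    dsimp only
    rw [show v - y + (y + x - v) = x by omega]
  · rintro ⟨x, y⟩ hp
    simp only [Finset.mem_sigma, Finset.mem_range, Finset.mem_Icc, Nat.lt_succ_iff,
      le_min_iff] at hp
    dsimp only
    have h1 : v + m - v = m := by omega
    have h2 : x + (v - x + y) - v = y := by omega
    have h3 : v + m - (v - x + y) = x + (m - y) := by omega
    have h4 : x + (m - y) - x = m - y := by omega
    rw [h1, h2, h3, h4, pow_add, pow_add]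
    ring

open Polynomial in
lemma Cinner (α β : ℝ) (v N' w : ℕ) :
    (C (∑ i ∈ Finset.Icc (v - w) (min v (N' - w)),
        (v.choose i : ℝ) * (1 - β) ^ (v - i) * β ^ i *
          ((N' - v).choose (i + w - v) : ℝ) * α ^ (i + w - v) * (1 - α) ^ (N' - w - i))
        : Polynomial ℝ) =
    ∑ i ∈ Finset.Icc (v - w) (min v (N' - w)),
      (v.choose i : Polynomial ℝ) * C (1 - β) ^ (v - i) * C β ^ i *
        ((N' - v).choose (i + w - v) : Polynomial ℝ) * C α ^ (i + w - v) *
        C (1 - α) ^ (N' - w - i) := by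
  rw [map_sum]
  exact Finset.sum_congr rfl fun i _ => by simp [map_mul, map_pow, map_natCast]

open Polynomial in
lemma coeff_aux (N : ℕ) (α β : ℝ) (v u : ℕ) (hv : v ≤ N) (hu : u ≤ N) :
    (Ppoly N α β v).coeff u = Aent (N + 1) α β u v := by
  have hvm : v + (N - v) = N := by omega
  have hkey := key (R := Polynomial ℝ) (C (1 - β)) (C β) (C α) (C (1 - α)) X 1 v (N - v)
  rw [hvm] at hkey
  simp only [mul_one, one_pow] at hkey
  rw [Ppoly, hkey, Polynomial.finset_sum_coeff]
  simp only [← Cinner α β v N]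
  simp only [Polynomial.coeff_C_mul, Polynomial.coeff_X_pow, mul_ite, mul_one, mul_zero]
  rw [Finset.sum_ite_eq]
  simp only [Finset.mem_range, Nat.lt_succ_iff, hu, if_true]
  simp only [Aent, Nat.add_sub_cancel]

open Polynomial in
lemma subst_aux (N : ℕ) (α₁ α₂ β₁ β₂ : ℝ) (v : ℕ) (hv : v ≤ N) :
    Ppoly N (α₁ * (1 - β₂) + (1 - α₁) * α₂) (β₁ * (1 - α₂) + (1 - β₁) * β₂) v =
    ∑ w ∈ Finset.range (N + 1), C (Aent (N + 1) α₁ β₁ w v) * Ppoly N α₂ β₂ w := by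
  have hvm : v + (N - v) = N := by omega
  have hkey := key (R := Polynomial ℝ) (C (1 - β₁)) (C β₁) (C α₁) (C (1 - α₁))
      (C β₂ + C (1 - β₂) * X) (C α₂ * X + C (1 - α₂)) v (N - v)
  rw [hvm] at hkey
  have hQ : C β₁ * (C α₂ * X + C (1 - α₂)) + C (1 - β₁) * (C β₂ + C (1 - β₂) * X)
      = C (β₁ * (1 - α₂) + (1 - β₁) * β₂) + C (1 - (β₁ * (1 - α₂) + (1 - β₁) * β₂)) * X := by
    simp only [map_add, map_mul, map_sub, map_one]; ring
  have hS : C α₁ * (C β₂ + C (1 - β₂) * X) + C (1 - α₁) * (C α₂ * X + C (1 - α₂))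
      = C (α₁ * (1 - β₂) + (1 - α₁) * α₂) * X + C (1 - (α₁ * (1 - β₂) + (1 - α₁) * α₂)) := by
    simp only [map_add, map_mul, map_sub, map_one]; ring
  rw [hQ, hS] at hkey
  rw [Ppoly, hkey]
  refine Finset.sum_congr rfl fun w hw => ?_
  have hA : Aent (N + 1) α₁ β₁ w v
      = ∑ i ∈ Finset.Icc (v - w) (min v (N - w)),
          (v.choose i : ℝ) * (1 - β₁) ^ (v - i) * β₁ ^ i *
            ((N - v).choose (i + w - v) : ℝ) * α₁ ^ (i + w - v) * (1 - α₁) ^ (N - w - i) := by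
    simp only [Aent, Nat.add_sub_cancel]
  rw [Ppoly, hA, Cinner, mul_assoc]

theorem Amat_semigroup (n : ℕ) (α₁ α₂ β₁ β₂ : ℝ)
    (hα₁ : α₁ ∈ Set.Icc (0 : ℝ) 1) (hα₂ : α₂ ∈ Set.Icc (0 : ℝ) 1)
    (hβ₁ : β₁ ∈ Set.Icc (0 : ℝ) 1) (hβ₂ : β₂ ∈ Set.Icc (0 : ℝ) 1) :
    Amat n α₂ β₂ * Amat n α₁ β₁ =
      Amat n (α₁ * (1 - β₂) + (1 - α₁) * α₂) (β₁ * (1 - α₂) + (1 - β₁) * β₂) := by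
  ext u v
  rw [Matrix.mul_apply]
  obtain ⟨N, rfl⟩ : ∃ N, n = N + 1 := ⟨n - 1, by have := u.2; omega⟩
  simp only [Amat]
  have hv : (v : ℕ) ≤ N := by have := v.2; omega
  have hu : (u : ℕ) ≤ N := by have := u.2; omega
  rw [← coeff_aux N (α₁ * (1 - β₂) + (1 - α₁) * α₂) (β₁ * (1 - α₂) + (1 - β₁) * β₂) v u hv hu,
    subst_aux N α₁ α₂ β₁ β₂ v hv, Polynomial.finset_sum_coeff]
  rw [Fin.sum_univ_eq_sum_range
    (fun w => Aent (N + 1) α₂ β₂ u w * Aent (N + 1) α₁ β₁ w v) (N + 1)]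
  refine Finset.sum_congr rfl fun w hw => ?_
  rw [Polynomial.coeff_C_mul,
    coeff_aux N α₂ β₂ w u (by simpa [Nat.lt_succ_iff] using hw) hu]
  exact mul_comm _ _
end
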